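/- Let f, g: (a, b) → ℝ≥0 be C² functions such that: (1) the limits as x → b⁻ of the unit tangent vectors t_f(x) = (1, f'(x))/|(1, f'(x))| and t_g(x) exist; (2) lim_{x→b⁻} f(x) and lim_{x→b⁻} g(x) exist; (3) f' ≥ 0 and g' ≥ 0 on (a, b); (4) lim_{x→b⁻} f(x) ≤ lim_{x→b⁻} g(x) and lim_{x→b⁻} θ(t_f(x)) ≥ lim_{x→b⁻} θ(t_g(x)); (5) the upward curvature satisfies κ_f(x) ≤ κ_g(x) for all x ∈ (a, b). Then for every x ∈ (a, b), f(x) ≤ g(x) and θ(t_f(x)) ≥ θ(t_g(x)). Moreover, if κ_f(x₀) < κ_g(x₀) for some x₀ ∈ (a, b), then there is φ > 0 with θ(t_f(x)) − θ(t_g(x)) ≥ φ for all x ∈ (a, x₀). -/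

import Mathlib

open Real Filter Set

lemma aux_rpow_17 (t : ℝ) : (1 + t ^ 2) ^ ((3:ℝ)/2) = (1 + t ^ 2) * Real.sqrt (1 + t ^ 2) := by
  have hpos : (0:ℝ) < 1 + t ^ 2 := by positivity
  rw [show ((3:ℝ)/2) = 1 + 1/2 by norm_num, Real.rpow_add hpos, Real.rpow_one,
    Real.sqrt_eq_rpow]

lemma aux_hasDerivAt_17 (p : ℝ → ℝ) (x : ℝ) (hp : HasDerivAt p (deriv p x) x) :
    HasDerivAt (fun y => sin (arctan (p y)))
      (deriv p x / (1 + p x ^ 2) ^ ((3:ℝ)/2)) x := by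
  have h2 : HasDerivAt (fun y => arctan (p y)) (1 / (1 + p x ^ 2) * deriv p x) x :=
    (Real.hasDerivAt_arctan (p x)).comp x hp
  have h3 : HasDerivAt (fun y => sin (arctan (p y)))
      (cos (arctan (p x)) * (1 / (1 + p x ^ 2) * deriv p x)) x :=
    h2.sin
  convert h3 using 1
  rw [Real.cos_arctan, aux_rpow_17]
  rw [div_eq_mul_inv, mul_inv]
  ring

lemma aux_sin_sub_17 (x y : ℝ) (h : y ≤ x) : Real.sin x - Real.sin y ≤ x - y := by
  rw [Real.sin_sub_sin]
  have h1 : Real.sin ((x-y)/2) * Real.cos ((x+y)/2) ≤ |(x-y)/2| := by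
    refine (le_abs_self _).trans ?_
    rw [abs_mul]
    exact (mul_le_of_le_one_right (abs_nonneg _) (Real.abs_cos_le_one _)).trans
      Real.abs_sin_le_abs
  rw [abs_of_nonneg (by linarith)] at h1
  linarith

/-- Chambers' curvature comparison (Prop. 3.8).  The angle of the unit
tangent `t_h(x) = (1, h'(x))/|(1, h'(x))|` is encoded monotonically by
`arctan (h'(x))`, and the upward curvature of the graph of `h` is
`κ_h(x) = h''(x)/(1 + h'(x)²)^(3/2)`.  Given `C²` functions
`f, g : (a, b) → ℝ≥0` with existing limits at `b⁻` of values and tangent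
angles, nonnegative derivatives, `lim f ≤ lim g`, `lim θ(t_f) ≥ lim θ(t_g)`,
and `κ_f ≤ κ_g` on `(a, b)`, we conclude `f ≤ g` and `θ(t_f) ≥ θ(t_g)` on
`(a, b)`; and if `κ_f(x₀) < κ_g(x₀)` at some `x₀ ∈ (a, b)`, then there is
`φ > 0` with `θ(t_f(x)) - θ(t_g(x)) ≥ φ` for all `x ∈ (a, x₀)`. -/
theorem stmt_17 (a b : ℝ) (hab : a < b) (f g : ℝ → ℝ)
    (hf : ContDiffOn ℝ 2 f (Ioo a b)) (hg : ContDiffOn ℝ 2 g (Ioo a b))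
    (hf0 : ∀ x ∈ Ioo a b, 0 ≤ f x) (hg0 : ∀ x ∈ Ioo a b, 0 ≤ g x)
    (hf' : ∀ x ∈ Ioo a b, 0 ≤ deriv f x) (hg' : ∀ x ∈ Ioo a b, 0 ≤ deriv g x)
    (Lf Lg Tf Tg : ℝ)
    (hLf : Tendsto f (nhdsWithin b (Iio b)) (nhds Lf))
    (hLg : Tendsto g (nhdsWithin b (Iio b)) (nhds Lg))
    (hTf : Tendsto (fun x => arctan (deriv f x)) (nhdsWithin b (Iio b)) (nhds Tf))
    (hTg : Tendsto (fun x => arctan (deriv g x)) (nhdsWithin b (Iio b)) (nhds Tg))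
    (hL : Lf ≤ Lg) (hT : Tg ≤ Tf)
    (hκ : ∀ x ∈ Ioo a b,
      deriv (deriv f) x / (1 + (deriv f x)^2) ^ ((3:ℝ)/2) ≤
      deriv (deriv g) x / (1 + (deriv g x)^2) ^ ((3:ℝ)/2)) :
    (∀ x ∈ Ioo a b, f x ≤ g x ∧ arctan (deriv g x) ≤ arctan (deriv f x)) ∧
    (∀ x₀ ∈ Ioo a b,
      deriv (deriv f) x₀ / (1 + (deriv f x₀)^2) ^ ((3:ℝ)/2) <
        deriv (deriv g) x₀ / (1 + (deriv g x₀)^2) ^ ((3:ℝ)/2) →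
      ∃ φ > 0, ∀ x ∈ Ioo a x₀,
        φ ≤ arctan (deriv f x) - arctan (deriv g x)) := by
  have hopen : IsOpen (Ioo a b) := isOpen_Ioo
  -- differentiability structure
  have hfd : DifferentiableOn ℝ f (Ioo a b) := hf.differentiableOn (by norm_num)
  have hgd : DifferentiableOn ℝ g (Ioo a b) := hg.differentiableOn (by norm_num)
  have hf1 : ContDiffOn ℝ 1 (deriv f) (Ioo a b) := hf.deriv_of_isOpen hopen (by norm_num)
  have hg1 : ContDiffOn ℝ 1 (deriv g) (Ioo a b) := hg.deriv_of_isOpen hopen (by norm_num)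
  have hDf : ∀ x ∈ Ioo a b, HasDerivAt (deriv f) (deriv (deriv f) x) x := fun x hx =>
    (((hf1.differentiableOn one_ne_zero).differentiableAt (hopen.mem_nhds hx))).hasDerivAt
  have hDg : ∀ x ∈ Ioo a b, HasDerivAt (deriv g) (deriv (deriv g) x) x := fun x hx =>
    (((hg1.differentiableOn one_ne_zero).differentiableAt (hopen.mem_nhds hx))).hasDerivAt
  -- the comparison function w = sin θ_g - sin θ_f
  set u : ℝ → ℝ := fun x => sin (arctan (deriv f x)) with hu_def
  set v : ℝ → ℝ := fun x => sin (arctan (deriv g x)) with hv_def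
  set w : ℝ → ℝ := fun x => v x - u x with hw_def
  have hwD : ∀ x ∈ Ioo a b, HasDerivAt w
      (deriv (deriv g) x / (1 + (deriv g x)^2) ^ ((3:ℝ)/2) -
       deriv (deriv f) x / (1 + (deriv f x)^2) ^ ((3:ℝ)/2)) x := fun x hx =>
    (aux_hasDerivAt_17 (deriv g) x (hDg x hx)).sub (aux_hasDerivAt_17 (deriv f) x (hDf x hx))
  have hwmono : MonotoneOn w (Ioo a b) := by
    apply monotoneOn_of_deriv_nonneg (convex_Ioo a b)
    · exact fun x hx => ((hwD x hx).continuousAt).continuousWithinAt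
    · rw [hopen.interior_eq]
      exact fun x hx => ((hwD x hx).differentiableAt).differentiableWithinAt
    · rw [hopen.interior_eq]
      intro x hx
      rw [(hwD x hx).deriv]
      exact sub_nonneg.mpr (hκ x hx)
  -- limits at b⁻
  have hu_lim : Tendsto u (nhdsWithin b (Iio b)) (nhds (sin Tf)) :=
    (Real.continuous_sin.tendsto Tf).comp hTf
  have hv_lim : Tendsto v (nhdsWithin b (Iio b)) (nhds (sin Tg)) :=
    (Real.continuous_sin.tendsto Tg).comp hTg
  have hw_lim : Tendsto w (nhdsWithin b (Iio b)) (nhds (sin Tg - sin Tf)) :=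
    hv_lim.sub hu_lim
  have hTf_mem : Tf ∈ Icc (-(π/2)) (π/2) := by
    constructor
    · exact ge_of_tendsto hTf (Eventually.of_forall fun x => (neg_pi_div_two_lt_arctan _).le)
    · exact le_of_tendsto hTf (Eventually.of_forall fun x => (arctan_lt_pi_div_two _).le)
  have hTg_mem : Tg ∈ Icc (-(π/2)) (π/2) := by
    constructor
    · exact ge_of_tendsto hTg (Eventually.of_forall fun x => (neg_pi_div_two_lt_arctan _).le)
    · exact le_of_tendsto hTg (Eventually.of_forall fun x => (arctan_lt_pi_div_two _).le)
  have hsin : sin Tg ≤ sin Tf := Real.strictMonoOn_sin.monotoneOn hTg_mem hTf_mem hT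
  -- w ≤ limit ≤ 0 on (a,b)
  have hwkey : ∀ x ∈ Ioo a b, w x ≤ sin Tg - sin Tf := by
    intro x hx
    refine ge_of_tendsto hw_lim ?_
    filter_upwards [Ioo_mem_nhdsLT_of_mem (⟨hx.2, le_refl b⟩ : b ∈ Ioc x b)] with y hy
    exact hwmono hx ⟨hx.1.trans hy.1, hy.2⟩ hy.1.le
  have hwle : ∀ x ∈ Ioo a b, w x ≤ 0 := fun x hx =>
    (hwkey x hx).trans (sub_nonpos.mpr hsin)
  have hmem : ∀ t : ℝ, arctan t ∈ Icc (-(π/2)) (π/2) := fun t =>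
    ⟨(neg_pi_div_two_lt_arctan t).le, (arctan_lt_pi_div_two t).le⟩
  have hang : ∀ x ∈ Ioo a b, arctan (deriv g x) ≤ arctan (deriv f x) := by
    intro x hx
    have h0 := hwle x hx
    have h1 : sin (arctan (deriv g x)) ≤ sin (arctan (deriv f x)) := by
      simpa [hw_def, hv_def, hu_def, sub_nonpos] using h0
    exact (Real.strictMonoOn_sin.le_iff_le (hmem _) (hmem _)).mp h1
  have hderiv : ∀ x ∈ Ioo a b, deriv g x ≤ deriv f x := by
    intro x hx
    have := hang x hx
    by_contra hcon
    push_neg at hcon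
    exact absurd (Real.arctan_strictMono hcon) (not_lt.mpr this)
  -- f ≤ g
  have hdD : ∀ x ∈ Ioo a b, HasDerivAt (fun y => g y - f y) (deriv g x - deriv f x) x :=
    fun x hx =>
      ((hgd.differentiableAt (hopen.mem_nhds hx)).hasDerivAt).sub
        ((hfd.differentiableAt (hopen.mem_nhds hx)).hasDerivAt)
  have hdanti : AntitoneOn (fun y => g y - f y) (Ioo a b) := by
    apply antitoneOn_of_deriv_nonpos (convex_Ioo a b)
    · exact fun x hx => ((hdD x hx).continuousAt).continuousWithinAt
    · rw [hopen.interior_eq]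
      exact fun x hx => ((hdD x hx).differentiableAt).differentiableWithinAt
    · rw [hopen.interior_eq]
      intro x hx
      rw [(hdD x hx).deriv]
      exact sub_nonpos.mpr (hderiv x hx)
  have hfg : ∀ x ∈ Ioo a b, f x ≤ g x := by
    intro x hx
    have hlim : Tendsto (fun y => g y - f y) (nhdsWithin b (Iio b)) (nhds (Lg - Lf)) :=
      hLg.sub hLf
    have h1 : Lg - Lf ≤ g x - f x := by
      refine le_of_tendsto hlim ?_
      filter_upwards [Ioo_mem_nhdsLT_of_mem (⟨hx.2, le_refl b⟩ : b ∈ Ioc x b)] with y hy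
      exact hdanti hx ⟨hx.1.trans hy.1, hy.2⟩ hy.1.le
    linarith
  refine ⟨fun x hx => ⟨hfg x hx, hang x hx⟩, ?_⟩
  -- strict part
  intro x₀ hx₀ hst
  -- continuity of the curvature difference
  have hcf : ContinuousOn (fun x => deriv (deriv f) x / (1 + (deriv f x)^2) ^ ((3:ℝ)/2))
      (Ioo a b) := by
    apply ContinuousOn.div
    · have h2 : ContDiffOn ℝ 0 (deriv (deriv f)) (Ioo a b) :=
        hf1.deriv_of_isOpen hopen (by norm_num)
      exact h2.continuousOn
    · exact (continuousOn_const.add ((hf1.continuousOn).pow 2)).rpow_const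
        (fun x hx => Or.inr (by norm_num))
    · exact fun x hx => ne_of_gt (Real.rpow_pos_of_pos (by positivity) _)
  have hcg : ContinuousOn (fun x => deriv (deriv g) x / (1 + (deriv g x)^2) ^ ((3:ℝ)/2))
      (Ioo a b) := by
    apply ContinuousOn.div
    · have h2 : ContDiffOn ℝ 0 (deriv (deriv g)) (Ioo a b) :=
        hg1.deriv_of_isOpen hopen (by norm_num)
      exact h2.continuousOn
    · exact (continuousOn_const.add ((hg1.continuousOn).pow 2)).rpow_const
        (fun x hx => Or.inr (by norm_num))
    · exact fun x hx => ne_of_gt (Real.rpow_pos_of_pos (by positivity) _)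
  have hcW : ContinuousAt (fun x => deriv (deriv g) x / (1 + (deriv g x)^2) ^ ((3:ℝ)/2) -
      deriv (deriv f) x / (1 + (deriv f x)^2) ^ ((3:ℝ)/2)) x₀ :=
    ((hcg.sub hcf).continuousAt (hopen.mem_nhds hx₀))
  have hnhds : {y | 0 < deriv (deriv g) y / (1 + (deriv g y)^2) ^ ((3:ℝ)/2) -
      deriv (deriv f) y / (1 + (deriv f y)^2) ^ ((3:ℝ)/2)} ∩ Ioo a b ∈ nhds x₀ := by
    refine inter_mem ?_ (hopen.mem_nhds hx₀)
    exact hcW (Ioi_mem_nhds (sub_pos.mpr hst))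
  obtain ⟨ε, εpos, hball⟩ := Metric.mem_nhds_iff.mp hnhds
  set x₁ : ℝ := x₀ + min (ε/2) ((b - x₀)/2) with hx₁_def
  have hbx₀ : 0 < b - x₀ := sub_pos.mpr hx₀.2
  have hminpos : 0 < min (ε/2) ((b - x₀)/2) := lt_min (by linarith) (by linarith)
  have hx₀x₁ : x₀ < x₁ := by simp only [hx₁_def]; linarith
  have hIcc : Icc x₀ x₁ ⊆ Metric.ball x₀ ε := by
    intro y hy
    rw [Metric.mem_ball, Real.dist_eq, abs_of_nonneg (by linarith [hy.1])]
    have h1 : y - x₀ ≤ min (ε/2) ((b - x₀)/2) := by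
      have := hy.2; simp only [hx₁_def] at this; linarith
    have h2 : min (ε/2) ((b - x₀)/2) ≤ ε/2 := min_le_left _ _
    linarith
  have hIccsub : Icc x₀ x₁ ⊆ {y | 0 < deriv (deriv g) y / (1 + (deriv g y)^2) ^ ((3:ℝ)/2) -
      deriv (deriv f) y / (1 + (deriv f y)^2) ^ ((3:ℝ)/2)} ∩ Ioo a b :=
    fun y hy => hball (hIcc hy)
  have hsm : StrictMonoOn w (Icc x₀ x₁) := by
    apply strictMonoOn_of_deriv_pos (convex_Icc x₀ x₁)
    · exact fun y hy => ((hwD y (hIccsub hy).2).continuousAt).continuousWithinAt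
    · intro y hy
      rw [interior_Icc] at hy
      have hy' := hIccsub (Ioo_subset_Icc_self hy)
      rw [(hwD y hy'.2).deriv]
      exact hy'.1
  have hx₁mem : x₁ ∈ Ioo a b := (hIccsub (right_mem_Icc.mpr hx₀x₁.le)).2
  have hlt : w x₀ < w x₁ :=
    hsm (left_mem_Icc.mpr hx₀x₁.le) (right_mem_Icc.mpr hx₀x₁.le) hx₀x₁
  have hwx₁ : w x₁ ≤ 0 := hwle x₁ hx₁mem
  refine ⟨w x₁ - w x₀, by linarith, ?_⟩
  intro x hx
  have hxab : x ∈ Ioo a b := ⟨hx.1, hx.2.trans hx₀.2⟩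
  have hmon : w x ≤ w x₀ := hwmono hxab hx₀ hx.2.le
  have hαβ : arctan (deriv g x) ≤ arctan (deriv f x) := hang x hxab
  have hsinsub : sin (arctan (deriv f x)) - sin (arctan (deriv g x)) ≤
      arctan (deriv f x) - arctan (deriv g x) := aux_sin_sub_17 _ _ hαβ
  have hwx : w x = sin (arctan (deriv g x)) - sin (arctan (deriv f x)) := rfl
  linarith
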